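/- Let ψ : [0,T] × ℝⁿ → ℝ be C¹, let x : [0,T] → ℝⁿ be differentiable at t with ψ(t, x(t)) = 0 and ψ(s, x(s)) ≤ 0 for all s in a neighborhood of t (in [0,T], with t interior). Suppose ẋ(t) = f − ξ∇ₓψ(t,x(t)) − w, where ξ ≥ 0, ⟨∇ₓψ(t,x(t)), w⟩ ≥ 0, |⟨∇ₓψ(t,x(t)), f⟩| + |∂_tψ(t,x(t))| ≤ μ₀, and |∇ₓψ(t,x(t))| ≥ η > 0. Then ξ ≤ μ₀/η². -/

import Mathlib

open RealInnerProductSpace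

/-- A priori bound on normal-cone multipliers: if ψ(·, x(·)) has a local maximum
value 0 at an interior time t, ẋ(t) = f - ξ∇ₓψ - w with ξ ≥ 0, ⟨∇ₓψ, w⟩ ≥ 0,
|⟨∇ₓψ, f⟩| + |∂ₜψ| ≤ μ₀ and |∇ₓψ| ≥ η > 0, then ξ ≤ μ₀/η². -/
theorem stmt6 {n : ℕ} (T : ℝ) (ψ : ℝ → EuclideanSpace ℝ (Fin n) → ℝ)
    (hψ : ContDiff ℝ 1 (fun q : ℝ × EuclideanSpace ℝ (Fin n) => ψ q.1 q.2))
    (x : ℝ → EuclideanSpace ℝ (Fin n)) (t : ℝ) (ht : t ∈ Set.Ioo 0 T)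
    (f w : EuclideanSpace ℝ (Fin n)) (ξ μ₀ η : ℝ)
    (hξ : 0 ≤ ξ) (hη : 0 < η)
    (hx : HasDerivAt x (f - ξ • gradient (ψ t) (x t) - w) t)
    (h0 : ψ t (x t) = 0)
    (hle : ∀ᶠ s in nhds t, ψ s (x s) ≤ 0)
    (hw : 0 ≤ ⟪gradient (ψ t) (x t), w⟫)
    (hμ : |⟪gradient (ψ t) (x t), f⟫| + |deriv (fun s => ψ s (x t)) t| ≤ μ₀)
    (hgr : η ≤ ‖gradient (ψ t) (x t)‖) :
    ξ ≤ μ₀ / η ^ 2 := by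
  let E := EuclideanSpace ℝ (Fin n)
  set F : ℝ × E → ℝ := fun q => ψ q.1 q.2 with hFdef
  set g := gradient (ψ t) (x t) with hg
  set v : E := f - ξ • g - w with hv
  have hFd : DifferentiableAt ℝ F (t, x t) := (hψ.differentiable one_ne_zero).differentiableAt
  set D : ℝ × E →L[ℝ] ℝ := fderiv ℝ F (t, x t) with hD
  have hF : HasFDerivAt F D (t, x t) := hFd.hasFDerivAt
  -- derivative of s ↦ ψ s (x s)
  have hcurve : HasDerivAt (fun s => (s, x s)) ((1 : ℝ), v) t :=
    HasDerivAt.prodMk (hasDerivAt_id t) hx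
  have hcomp : HasDerivAt (fun s => ψ s (x s)) (D (1, v)) t := by
    exact hF.comp_hasDerivAt t hcurve
  -- local max ⇒ derivative zero
  have hmax : IsLocalMax (fun s => ψ s (x s)) t := by
    filter_upwards [hle] with s hs
    simpa [h0] using hs
  have hzero : D (1, v) = 0 := by
    have := hmax.hasDerivAt_eq_zero hcomp
    exact this
  -- partial t derivative
  have hpart : HasDerivAt (fun s => ψ s (x t)) (D (1, 0)) t := by
    have hc : HasDerivAt (fun s : ℝ => (s, x t)) ((1 : ℝ), (0 : E)) t :=
      HasDerivAt.prodMk (hasDerivAt_id t) (hasDerivAt_const t (x t))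
    exact hF.comp_hasDerivAt t hc
  have hpd : deriv (fun s => ψ s (x t)) t = D (1, 0) := hpart.deriv
  -- gradient of ψ t
  have hsp : HasFDerivAt (ψ t) (D.comp ((0 : E →L[ℝ] ℝ).prod (ContinuousLinearMap.id ℝ E))) (x t) := by
    have hc : HasFDerivAt (fun y : E => ((t : ℝ), y))
        ((0 : E →L[ℝ] ℝ).prod (ContinuousLinearMap.id ℝ E)) (x t) :=
      HasFDerivAt.prodMk (hasFDerivAt_const t (x t)) (hasFDerivAt_id (x t))
    exact hF.comp (x t) hc
  have hgrad : HasGradientAt (ψ t) g (x t) := by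
    rw [hg, (hasFDerivAt_iff_hasGradientAt.mp hsp).gradient]
    exact hasFDerivAt_iff_hasGradientAt.mp hsp
  have hinner : ∀ u : E, D (0, u) = ⟪g, u⟫ := by
    intro u
    have := (hasGradientAt_iff_hasFDerivAt.mp hgrad).unique hsp
    have := congrArg (fun L => L u) this.symm
    simp at this
    exact this
  -- split D (1, v)
  have hsplit : D (1, v) = D (1, 0) + D (0, v) := by
    rw [← map_add]
    norm_num
  have key : D (1, 0) + (⟪g, f⟫ - ξ * ⟪g, g⟫ - ⟪g, w⟫) = 0 := by
    have h1 : D (0, v) = ⟪g, f⟫ - ξ * ⟪g, g⟫ - ⟪g, w⟫ := by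
      rw [hinner v, hv, inner_sub_right, inner_sub_right, real_inner_smul_right]
    rw [← h1, ← hsplit, hzero]
  have hnorm : ⟪g, g⟫ = ‖g‖ ^ 2 := real_inner_self_eq_norm_sq g
  have hξμ : ξ * ‖g‖ ^ 2 ≤ μ₀ := by
    have h2 : ξ * ‖g‖ ^ 2 = D (1, 0) + ⟪g, f⟫ - ⟪g, w⟫ := by
      rw [← hnorm]; linarith [key]
    have habs := abs_le.mp (le_refl |⟪g, f⟫|)
    have habs2 := abs_le.mp (le_refl |deriv (fun s => ψ s (x t)) t|)
    rw [hpd] at habs2 hμ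
    linarith [habs.2, habs2.2, neg_abs_le ⟪g, f⟫, neg_abs_le (D (1,0))]
  have hη2 : η ^ 2 ≤ ‖g‖ ^ 2 := by
    have := pow_le_pow_left₀ hη.le hgr 2
    simpa using this
  rw [le_div_iff₀ (by positivity)]
  nlinarith
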